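/- arXiv:2409.08249 — 2 statements merged into one kernel-verified Lean document; each statement's English description precedes it below -/
import Mathlib

section
/- Let R₁, …, R_m, R' be scalar residuals and for x ∈ R define the empirical distribution function F_∞(x) = (1/(m+1)) · |{ i ≤ m : R_i ≤ x }| (treating the (m+1)-th residual as +∞, which contributes 0 to F_∞ for finite x). Let q̂ = inf{ x : F_∞(x) ≥ 1-α } with α ∈ (0,1) and α(m+1) ≥ 1. If the random vector (R₁,…,R_m,R') is exchangeable and the residuals are almost surely distinct, then P(R' ≤ q̂) ≥ 1 - α. -/
open MeasureTheory ProbabilityTheory Finset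
open scoped ENNReal

lemma card_filter_perm {n : ℕ} (π : Equiv.Perm (Fin n)) (p : Fin n → Prop) [DecidablePred p] :
    (univ.filter fun i => p (π i)).card = (univ.filter p).card := by
  refine Finset.card_bij (fun i _ => π i) ?_ ?_ ?_
  · intro a ha
    simp only [mem_filter, mem_univ, true_and] at ha ⊢
    exact ha
  · intro a _ b _ h
    exact π.injective h
  · intro b hb
    refine ⟨π.symm b, ?_, by simp⟩
    simp only [mem_filter, mem_univ, true_and] at hb ⊢
    simpa using hb

lemma rank_injective {n : ℕ} {y : Fin n → ℝ} (hy : Function.Injective y) :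
    Function.Injective (fun j => (univ.filter fun i => y i ≤ y j).card) := by
  classical
  have key : ∀ i j : Fin n, y i ≤ y j →
      (univ.filter fun a => y a ≤ y i).card = (univ.filter fun a => y a ≤ y j).card → i = j := by
    intro i j hle hcard
    have hsub : (univ.filter fun a => y a ≤ y i) ⊆ (univ.filter fun a => y a ≤ y j) := by
      intro a ha
      simp only [mem_filter, mem_univ, true_and] at ha ⊢
      exact ha.trans hle
    have heq := Finset.eq_of_subset_of_card_le hsub (le_of_eq hcard.symm)
    have hj : j ∈ (univ.filter fun a => y a ≤ y i) := by
      rw [heq]; simp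
    simp only [mem_filter, mem_univ, true_and] at hj
    exact hy (le_antisymm hle hj)
  intro i j h
  rcases le_total (y i) (y j) with hle | hle
  · exact key i j hle h
  · exact (key j i hle h.symm).symm

lemma card_rank_le {n k : ℕ} (y : Fin n → ℝ) (hy : Function.Injective y) (hk : k ≤ n) :
    (univ.filter fun j => (univ.filter fun i => y i ≤ y j).card ≤ k).card = k := by
  classical
  set g : Fin n → ℕ := fun j => (univ.filter fun i => y i ≤ y j).card with hg
  have hginj : Function.Injective g := rank_injective hy
  have himg : univ.image g = Finset.Icc 1 n := by
    apply Finset.eq_of_subset_of_card_le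
    · intro a ha
      simp only [mem_image, mem_univ, true_and] at ha
      obtain ⟨j, rfl⟩ := ha
      simp only [Finset.mem_Icc]
      constructor
      · exact Finset.card_pos.mpr ⟨j, by simp⟩
      · exact (Finset.card_filter_le _ _).trans (by simp)
    · rw [Finset.card_image_of_injective _ hginj]
      simp [Nat.card_Icc]
  calc (univ.filter fun j => g j ≤ k).card
      = ((univ.filter fun j => g j ≤ k).image g).card :=
        (Finset.card_image_of_injective _ hginj).symm
    _ = ((univ.image g).filter (fun a => a ≤ k)).card := by
        rw [Finset.filter_image]
    _ = ((Finset.Icc 1 n).filter (fun a => a ≤ k)).card := by rw [himg]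
    _ = (Finset.Icc 1 k).card := by
        congr 1; ext a; simp only [mem_filter, Finset.mem_Icc]; omega
    _ = k := by simp [Nat.card_Icc]

/-- Split conformal prediction coverage guarantee. Given calibration residuals
`R 1, …, R m` and a test residual `R'` that are jointly exchangeable and almost surely
distinct, the test residual is below the conformal quantile
`q̂ = inf {x : F_∞(x) ≥ 1-α}` (where `F_∞(x) = |{i : R i ≤ x}| / (m+1)`)
with probability at least `1-α`. -/
theorem split_conformal_coverage {m : ℕ}
    {Ω : Type*} [MeasurableSpace Ω] (P : Measure Ω) [IsProbabilityMeasure P]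
    (R : Fin m → Ω → ℝ) (R' : Ω → ℝ)
    (hR : ∀ i, Measurable (R i)) (hR' : Measurable R')
    (α : ℝ) (hα : α ∈ Set.Ioo (0 : ℝ) 1) (hαm : 1 ≤ α * (m + 1))
    -- exchangeability of the joint vector (R₁, …, R_m, R')
    (hexch : ∀ π : Equiv.Perm (Fin (m + 1)),
      Measure.map (fun ω => (fun j => (Fin.snoc (fun i => R i ω) (R' ω) : Fin (m+1) → ℝ) (π j))) P =
        Measure.map (fun ω => (Fin.snoc (fun i => R i ω) (R' ω) : Fin (m+1) → ℝ)) P)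
    -- the residuals are almost surely pairwise distinct
    (hdist : ∀ᵐ ω ∂P, Function.Injective (Fin.snoc (fun i => R i ω) (R' ω) : Fin (m+1) → ℝ)) :
    ENNReal.ofReal (1 - α) ≤
      P {ω | R' ω ≤ sInf {x : ℝ |
        1 - α ≤ ((univ.filter fun i : Fin m => R i ω ≤ x).card : ℝ) / (m + 1)}} := by
  classical
  obtain ⟨hα0, hα1⟩ := hα
  have hm : 1 ≤ m := by
    rcases Nat.eq_zero_or_pos m with h | h
    · subst h; norm_num at hαm; linarith
    · exact h
  set k : ℕ := ⌈(1 - α) * (m + 1)⌉₊ with hkdef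
  have hmpos : (0:ℝ) < (m:ℝ) + 1 := by positivity
  have hk1 : 1 ≤ k := Nat.ceil_pos.mpr (by nlinarith)
  have hkm : k ≤ m := Nat.ceil_le.mpr (by push_cast; nlinarith)
  set Y : Ω → (Fin (m+1) → ℝ) :=
    fun ω => (Fin.snoc (fun i => R i ω) (R' ω) : Fin (m+1) → ℝ) with hYdef
  have hYmeas : Measurable Y := by
    rw [measurable_pi_iff]
    intro j
    refine Fin.lastCases ?_ ?_ j
    · simpa [hYdef, Fin.snoc_last] using hR'
    · intro i
      simpa [hYdef, Fin.snoc_castSucc] using hR i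
  set B : Fin (m+1) → Set (Fin (m+1) → ℝ) :=
    fun j => {v | (univ.filter fun i => v i ≤ v j).card ≤ k} with hBdef
  have hBmeas : ∀ j, MeasurableSet (B j) := by
    intro j
    have hf : Measurable fun v : Fin (m+1) → ℝ => (univ.filter fun i => v i ≤ v j).card := by
      simp only [Finset.card_filter]
      refine Finset.measurable_sum _ fun i _ => ?_
      exact Measurable.ite (measurableSet_le (measurable_pi_apply i) (measurable_pi_apply j))
        measurable_const measurable_const
    exact hf (Set.Finite.measurableSet (Set.finite_Iic k))
  -- Step A: equal probabilities by exchangeability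
  have hA : ∀ j : Fin (m+1), P (Y ⁻¹' B j) = P (Y ⁻¹' B (Fin.last m)) := by
    intro j
    set π := Equiv.swap j (Fin.last m) with hπdef
    have hΦ : Measurable fun v : Fin (m+1) → ℝ => (fun i => v (π i)) :=
      measurable_pi_lambda _ fun i => measurable_pi_apply _
    have h1 : Measure.map ((fun v : Fin (m+1) → ℝ => (fun i => v (π i))) ∘ Y) P =
        Measure.map Y P := hexch π
    have h2 := congrArg (fun μ : Measure (Fin (m+1) → ℝ) => μ (B (Fin.last m))) h1
    rw [Measure.map_apply (hΦ.comp hYmeas) (hBmeas _),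
      Measure.map_apply hYmeas (hBmeas _), Set.preimage_comp] at h2
    have hpre : ((fun v : Fin (m+1) → ℝ => (fun i => v (π i))) ⁻¹' B (Fin.last m)) = B j := by
      ext v
      simp only [hBdef, Set.mem_preimage, Set.mem_setOf_eq]
      have hlast : π (Fin.last m) = j := Equiv.swap_apply_right _ _
      have h3 : (univ.filter fun i => v (π i) ≤ v (π (Fin.last m))).card
          = (univ.filter fun i => v i ≤ v j).card := by
        simp only [hlast]
        exact card_filter_perm π (fun i => v i ≤ v j)
      rw [h3]
    rw [← hpre]
    exact h2
  -- Step B: sum of probabilities = k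
  have hcount : ∀ᵐ ω ∂P, ∑ j : Fin (m+1), (Y ⁻¹' B j).indicator (1 : Ω → ℝ≥0∞) ω = k := by
    filter_upwards [hdist] with ω hω
    have heq : ∑ j : Fin (m+1), (Y ⁻¹' B j).indicator (1 : Ω → ℝ≥0∞) ω
        = ((univ.filter fun j : Fin (m+1) =>
            (univ.filter fun i => Y ω i ≤ Y ω j).card ≤ k).card : ℝ≥0∞) := by
      rw [Finset.card_filter, Nat.cast_sum]
      refine Finset.sum_congr rfl fun j _ => ?_
      by_cases h : (univ.filter fun i => Y ω i ≤ Y ω j).card ≤ k <;>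
        simp [Set.indicator_apply, hBdef, Set.mem_setOf_eq, h]
    rw [heq, card_rank_le (Y ω) hω (by omega)]
  have hsum : ∑ j : Fin (m+1), P (Y ⁻¹' B j) = k := by
    have h1 : ∀ j : Fin (m+1), P (Y ⁻¹' B j)
        = ∫⁻ ω, (Y ⁻¹' B j).indicator (1 : Ω → ℝ≥0∞) ω ∂P := fun j =>
      (lintegral_indicator_one (hYmeas (hBmeas j))).symm
    have h2 : ∫⁻ ω, ∑ j : Fin (m+1), (Y ⁻¹' B j).indicator (1 : Ω → ℝ≥0∞) ω ∂P
        = ∑ j : Fin (m+1), ∫⁻ ω, (Y ⁻¹' B j).indicator (1 : Ω → ℝ≥0∞) ω ∂P :=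
      lintegral_finset_sum _ (fun j _ => measurable_const.indicator (hYmeas (hBmeas j)))
    calc ∑ j : Fin (m+1), P (Y ⁻¹' B j)
        = ∑ j : Fin (m+1), ∫⁻ ω, (Y ⁻¹' B j).indicator (1 : Ω → ℝ≥0∞) ω ∂P :=
          Finset.sum_congr rfl fun j _ => h1 j
      _ = ∫⁻ ω, ∑ j : Fin (m+1), (Y ⁻¹' B j).indicator (1 : Ω → ℝ≥0∞) ω ∂P := h2.symm
      _ = ∫⁻ _ω, (k : ℝ≥0∞) ∂P := lintegral_congr_ae hcount
      _ = k := by simp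
  have hmain : ((m : ℝ≥0∞) + 1) * P (Y ⁻¹' B (Fin.last m)) = k := by
    calc ((m : ℝ≥0∞) + 1) * P (Y ⁻¹' B (Fin.last m))
        = ∑ _j : Fin (m+1), P (Y ⁻¹' B (Fin.last m)) := by
          rw [Finset.sum_const, Finset.card_univ, Fintype.card_fin, nsmul_eq_mul]
          push_cast
          ring
      _ = ∑ j : Fin (m+1), P (Y ⁻¹' B j) := Finset.sum_congr rfl fun j _ => (hA j).symm
      _ = k := hsum
  -- lower bound on P (E last)
  have hfin : ENNReal.ofReal (1 - α) ≤ P (Y ⁻¹' B (Fin.last m)) := by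
    rw [← ENNReal.mul_le_mul_iff_right (a := (m : ℝ≥0∞) + 1)
      (by simp) (ENNReal.add_ne_top.mpr ⟨ENNReal.natCast_ne_top m, ENNReal.one_ne_top⟩)]
    rw [hmain]
    have hcast : ((m : ℝ≥0∞) + 1) = ENNReal.ofReal ((m : ℝ) + 1) := by
      rw [ENNReal.ofReal_add (by positivity) zero_le_one, ENNReal.ofReal_natCast,
        ENNReal.ofReal_one]
    rw [hcast, ← ENNReal.ofReal_mul (by positivity)]
    have : ((m : ℝ) + 1) * (1 - α) ≤ (k : ℝ) := by
      have := Nat.le_ceil ((1 - α) * ((m : ℝ) + 1))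
      rw [← hkdef] at this
      nlinarith
    calc ENNReal.ofReal (((m : ℝ) + 1) * (1 - α)) ≤ ENNReal.ofReal (k : ℝ) :=
          ENNReal.ofReal_le_ofReal this
      _ = (k : ℝ≥0∞) := ENNReal.ofReal_natCast k
  -- deterministic inclusion
  refine hfin.trans (measure_mono ?_)
  intro ω hω
  simp only [Set.mem_preimage, hBdef, Set.mem_setOf_eq] at hω
  have hYlast : Y ω (Fin.last m) = R' ω := by simp [hYdef, Fin.snoc_last]
  rw [hYlast] at hω
  have hsplit : (univ.filter fun i : Fin (m+1) => Y ω i ≤ R' ω).card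
      = (univ.filter fun i : Fin m => R i ω ≤ R' ω).card + 1 := by
    rw [Finset.card_filter, Finset.card_filter, Fin.sum_univ_castSucc]
    simp [hYdef, Fin.snoc_castSucc, Fin.snoc_last]
  rw [hsplit] at hω
  simp only [Set.mem_setOf_eq]
  have hmem : ∀ x : ℝ, (1 - α ≤ ((univ.filter fun i : Fin m => R i ω ≤ x).card : ℝ) / (m + 1))
      ↔ k ≤ (univ.filter fun i : Fin m => R i ω ≤ x).card := by
    intro x
    rw [le_div_iff₀ hmpos]
    exact Nat.ceil_le.symm
  -- S is nonempty
  have hne : {x : ℝ | 1 - α ≤ ((univ.filter fun i : Fin m => R i ω ≤ x).card : ℝ) / (m + 1)}.Nonempty := by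
    have hne' : (univ.image fun i : Fin m => R i ω).Nonempty :=
      Finset.Nonempty.image ⟨⟨0, hm⟩, Finset.mem_univ _⟩ _
    set M := (univ.image fun i : Fin m => R i ω).max' hne' with hMdef
    refine ⟨M, (hmem M).mpr ?_⟩
    have : (univ.filter fun i : Fin m => R i ω ≤ M) = univ := by
      refine Finset.filter_true_of_mem fun i _ => ?_
      exact Finset.le_max' (univ.image fun i : Fin m => R i ω) _
        (Finset.mem_image_of_mem _ (Finset.mem_univ i))
    rw [this, Finset.card_univ, Fintype.card_fin]
    omega
  refine le_csInf hne fun x hx => ?_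
  rw [Set.mem_setOf_eq, hmem x] at hx
  by_contra hlt
  push_neg at hlt
  have hsub2 : (univ.filter fun i : Fin m => R i ω ≤ x) ⊆
      (univ.filter fun i : Fin m => R i ω ≤ R' ω) := by
    intro i hi
    simp only [Finset.mem_filter, Finset.mem_univ, true_and] at hi ⊢
    linarith
  have := Finset.card_le_card hsub2
  omega
end

section
/- Consider linear dynamics covariance propagation T(Σ) = A Σ Aᵀ + Q with Q positive semidefinite, a fixed calibration set of points {(μ_i, s_i)}_{i=1}^m in R^n × R^n, and two input covariances Σ₀ ≤ Σ_τ (Loewner order, both positive definite, with T(Σ₀), T(Σ_τ) positive definite). Define residuals R_i = sqrt((s_i - μ'_i)ᵀ T(Σ₀)^{-1} (s_i - μ'_i)) and R'_i = sqrt((s_i - μ'_i)ᵀ T(Σ_τ)^{-1} (s_i - μ'_i)) where μ'_i is the common propagated mean. Then R'_i ≤ R_i for every i, and the conformal (1-α)-quantiles satisfy q̂' ≤ q̂, hence the scaling factors ξ' = q̂'²/χ²_{n,α} and ξ = q̂²/χ²_{n,α} satisfy ξ' ≤ ξ. -/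
open Matrix Finset


lemma aux_quad_nonneg {k : ℕ} {M : Matrix (Fin k) (Fin k) ℝ} (hM : M.PosSemidef)
    (x : Fin k → ℝ) : 0 ≤ x ⬝ᵥ M *ᵥ x := by
  simpa using hM.dotProduct_mulVec_nonneg x

lemma aux_symm_dot {k : ℕ} {M : Matrix (Fin k) (Fin k) ℝ} (hM : M.IsHermitian)
    (x y : Fin k → ℝ) : x ⬝ᵥ M *ᵥ y = y ⬝ᵥ M *ᵥ x := by
  have hMt : Mᵀ = M := by
    rw [← conjTranspose_eq_transpose_of_trivial]; exact hM.eq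
  rw [dotProduct_mulVec, ← mulVec_transpose, hMt, dotProduct_comm]

/-- Inverse is antitone on positive definite matrices (quadratic-form version). -/
lemma aux_inv_antitone {k : ℕ} {M N : Matrix (Fin k) (Fin k) ℝ}
    (hM : M.PosDef) (hN : N.PosDef) (hMN : (N - M).PosSemidef) (v : Fin k → ℝ) :
    v ⬝ᵥ N⁻¹ *ᵥ v ≤ v ⬝ᵥ M⁻¹ *ᵥ v := by
  set z := N⁻¹ *ᵥ v with hz
  set w := M⁻¹ *ᵥ v with hw
  have hNz : N *ᵥ z = v := by
    rw [hz, mulVec_mulVec, mul_nonsing_inv _ hN.det_pos.ne'.isUnit, one_mulVec]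
  have hMw : M *ᵥ w = v := by
    rw [hw, mulVec_mulVec, mul_nonsing_inv _ hM.det_pos.ne'.isUnit, one_mulVec]
  have h1 : 0 ≤ (w - z) ⬝ᵥ M *ᵥ (w - z) := aux_quad_nonneg hM.posSemidef _
  have h2 : 0 ≤ z ⬝ᵥ (N - M) *ᵥ z := aux_quad_nonneg hMN _
  have hsym : z ⬝ᵥ M *ᵥ w = w ⬝ᵥ M *ᵥ z := aux_symm_dot hM.isHermitian z w
  have e1 : (w - z) ⬝ᵥ M *ᵥ (w - z)
      = w ⬝ᵥ M *ᵥ w - 2 * (z ⬝ᵥ M *ᵥ w) + z ⬝ᵥ M *ᵥ z := by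
    simp only [mulVec_sub, dotProduct_sub, sub_dotProduct, hsym]
    ring
  have e2 : z ⬝ᵥ (N - M) *ᵥ z = z ⬝ᵥ N *ᵥ z - z ⬝ᵥ M *ᵥ z := by
    rw [sub_mulVec, dotProduct_sub]
  have hzv : z ⬝ᵥ N *ᵥ z = z ⬝ᵥ v := by rw [hNz]
  have hwv : w ⬝ᵥ M *ᵥ w = w ⬝ᵥ v := by rw [hMw]
  have hzw : z ⬝ᵥ M *ᵥ w = z ⬝ᵥ v := by rw [hMw]
  have hvz : v ⬝ᵥ N⁻¹ *ᵥ v = z ⬝ᵥ v := by rw [← hz, dotProduct_comm]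
  have hvw : v ⬝ᵥ M⁻¹ *ᵥ v = w ⬝ᵥ v := by rw [← hw, dotProduct_comm]
  rw [hvz, hvw]
  nlinarith [h1, h2, e1, e2, hzv, hwv, hzw]

/-- Multi-step scaling factor upper bound for linear dynamics. With covariance
propagation `T(Σ) = A Σ Aᵀ + Q` (`Q` PSD) and input covariances `Σ₀ ≤ Σ_τ` (Loewner
order), the residuals computed with `T(Σ_τ)` are dominated by those computed with
`T(Σ₀)`, hence the conformal `(1-α)`-quantiles satisfy `q̂' ≤ q̂` and the scaling
factors satisfy `ξ' ≤ ξ`. -/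
theorem multistep_scaling_factor_upper_bound {n m : ℕ}
    (A Q : Matrix (Fin n) (Fin n) ℝ) (hQ : Q.PosSemidef)
    (S₀ Sτ : Matrix (Fin n) (Fin n) ℝ) (hS₀ : S₀.PosDef) (hSτ : Sτ.PosDef)
    (hle : (Sτ - S₀).PosSemidef)
    (hT₀ : (A * S₀ * Aᵀ + Q).PosDef) (hTτ : (A * Sτ * Aᵀ + Q).PosDef)
    (μ' s : Fin m → (Fin n → ℝ))  -- propagated means and true next states
    (R R' : Fin m → ℝ)
    (hR : R = fun i => Real.sqrt
      ((s i - μ' i) ⬝ᵥ (A * S₀ * Aᵀ + Q)⁻¹.mulVec (s i - μ' i)))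
    (hR' : R' = fun i => Real.sqrt
      ((s i - μ' i) ⬝ᵥ (A * Sτ * Aᵀ + Q)⁻¹.mulVec (s i - μ' i)))
    (α : ℝ) (hα : α ∈ Set.Ioo (0 : ℝ) 1) (hαm : 1 ≤ α * (m + 1))
    (qhat qhat' : ℝ)
    (hq : qhat = sInf {x : ℝ |
      1 - α ≤ ((univ.filter fun i : Fin m => R i ≤ x).card : ℝ) / (m + 1)})
    (hq' : qhat' = sInf {x : ℝ |
      1 - α ≤ ((univ.filter fun i : Fin m => R' i ≤ x).card : ℝ) / (m + 1)})
    (χ : ℝ) (hχ : 0 < χ)  -- the (1-α)-quantile of the chi-squared distribution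
    (ξ ξ' : ℝ) (hξ : ξ = qhat ^ 2 / χ) (hξ' : ξ' = qhat' ^ 2 / χ) :
    (∀ i, R' i ≤ R i) ∧ qhat' ≤ qhat ∧ ξ' ≤ ξ := by
  obtain ⟨hα0, hα1⟩ := hα
  have hm1 : (0:ℝ) < (m:ℝ) + 1 := by positivity
  -- Part 1 : residual domination
  have hPSD : ((A * Sτ * Aᵀ + Q) - (A * S₀ * Aᵀ + Q)).PosSemidef := by
    have h := hle.mul_mul_conjTranspose_same A
    rw [conjTranspose_eq_transpose_of_trivial] at h
    have heq : (A * Sτ * Aᵀ + Q) - (A * S₀ * Aᵀ + Q) = A * (Sτ - S₀) * Aᵀ := by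
      noncomm_ring
    rw [heq]; exact h
  have hdom : ∀ i, R' i ≤ R i := by
    intro i
    rw [hR, hR']
    exact Real.sqrt_le_sqrt (aux_inv_antitone hT₀ hTτ hPSD _)
  have hR'nonneg : ∀ i, 0 ≤ R' i := by
    intro i; rw [hR']; exact Real.sqrt_nonneg _
  set S : Set ℝ := {x : ℝ |
      1 - α ≤ ((univ.filter fun i : Fin m => R i ≤ x).card : ℝ) / (m + 1)} with hS
  set S' : Set ℝ := {x : ℝ |
      1 - α ≤ ((univ.filter fun i : Fin m => R' i ≤ x).card : ℝ) / (m + 1)} with hS'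
  have hsub : S ⊆ S' := by
    intro x hx
    simp only [hS, Set.mem_setOf_eq] at hx
    simp only [hS', Set.mem_setOf_eq]
    refine le_trans hx ?_
    have hss : (univ.filter fun i : Fin m => R i ≤ x) ⊆
        (univ.filter fun i : Fin m => R' i ≤ x) := by
      intro i hi
      simp only [mem_filter, mem_univ, true_and] at hi ⊢
      exact (hdom i).trans hi
    have hcc := Finset.card_le_card hss
    gcongr

  have hSne : S.Nonempty := by
    obtain ⟨x₀, hx₀⟩ := Finite.exists_le R
    refine ⟨x₀, ?_⟩
    have : (univ.filter fun i : Fin m => R i ≤ x₀) = univ := by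
      apply Finset.filter_true_of_mem; intro i _; exact hx₀ i
    rw [Set.mem_setOf_eq, this, Finset.card_univ, Fintype.card_fin,
      le_div_iff₀ hm1]
    nlinarith [hαm]
  have hbdd : ∀ x ∈ S', (0:ℝ) ≤ x := by
    intro x hx
    rw [Set.mem_setOf_eq] at hx
    have hcard : 0 < (univ.filter fun i : Fin m => R' i ≤ x).card := by
      rw [Finset.card_pos]
      by_contra h
      rw [Finset.not_nonempty_iff_eq_empty] at h
      rw [h] at hx
      simp only [Finset.card_empty, Nat.cast_zero, zero_div] at hx
      linarith
    obtain ⟨i, hi⟩ := Finset.card_pos.mp hcard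
    simp only [mem_filter, mem_univ, true_and] at hi
    exact le_trans (hR'nonneg i) hi
  have hS'ne : S'.Nonempty := hSne.mono hsub
  have hqq : qhat' ≤ qhat := by
    rw [hq, hq']
    exact csInf_le_csInf ⟨0, hbdd⟩ hSne hsub
  have hq0 : 0 ≤ qhat' := by
    rw [hq']
    exact le_csInf hS'ne hbdd
  refine ⟨hdom, hqq, ?_⟩
  rw [hξ, hξ']
  have h2 : qhat' ^ 2 ≤ qhat ^ 2 := pow_le_pow_left₀ hq0 hqq 2
  gcongr
end
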